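/- (Remark on CZ preserving triviality away from its support.) Let K₁, …, K_n be pairwise commuting n-qubit Pauli tensors, let u ≠ v be qubits, and let c ⊆ {1,…,n} be such that the stabilizer S_c = ∏_{i∈c} Kᵢ satisfies u ∉ qsupp(S_c) and v ∉ qsupp(S_c). Then S_c is trivial with respect to the generators K₁,…,K_n if and only if CZ_{u,v} S_c CZ_{u,v}† is trivial with respect to the conjugated generators CZ_{u,v} K₁ CZ_{u,v}†, …, CZ_{u,v} K_n CZ_{u,v}†. In particular, a stabilizer with no support on u and v remains trivial (respectively non-trivial) after the controlled-Z gate on u and v. -/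

import Mathlib

open Matrix

noncomputable section

/-- Operators on the Hilbert space of qubits indexed by `ι`, as matrices. -/
abbrev QOp (ι : Type*) := Matrix (ι → Fin 2) (ι → Fin 2) ℂ

def Xmat : Matrix (Fin 2) (Fin 2) ℂ := !![0, 1; 1, 0]
def Ymat : Matrix (Fin 2) (Fin 2) ℂ := !![0, -Complex.I; Complex.I, 0]
def Zmat : Matrix (Fin 2) (Fin 2) ℂ := !![1, 0; 0, -1]

/-- `P` is a 2×2 Pauli matrix (including the identity). -/
def IsPauliMat (P : Matrix (Fin 2) (Fin 2) ℂ) : Prop :=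
  P = 1 ∨ P = Xmat ∨ P = Ymat ∨ P = Zmat

/-- `c` is an allowed Pauli phase. -/
def IsPhase (c : ℂ) : Prop :=
  c = 1 ∨ c = -1 ∨ c = Complex.I ∨ c = -Complex.I

/-- The operator `c • P₀ ⊗ ⋯ ⊗ P_{n-1}` with entries `c * ∏ i, P i (a i) (b i)`. -/
def pauliTensor {ι : Type*} [Fintype ι] (c : ℂ)
    (P : ι → Matrix (Fin 2) (Fin 2) ℂ) : QOp ι :=
  Matrix.of fun a b => c * ∏ i, P i (a i) (b i)

/-- `A` is an n-qubit Pauli tensor. -/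
def IsPauliTensor {ι : Type*} [Fintype ι] (A : QOp ι) : Prop :=
  ∃ (c : ℂ) (P : ι → Matrix (Fin 2) (Fin 2) ℂ),
    IsPhase c ∧ (∀ i, IsPauliMat (P i)) ∧ A = pauliTensor c P

/-- `A` acts trivially on qubit `q`, i.e. `A = I_q ⊗ B`: entrywise, the `(x,y)` block
of `A` with respect to qubit `q` equals `δ_{x y}` times a fixed block. -/
def ActsTriviallyOn {ι : Type*} [DecidableEq ι] (A : QOp ι) (q : ι) : Prop :=
  ∀ (a b : ι → Fin 2) (x y : Fin 2),
    A (Function.update a q x) (Function.update b q y) =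
      (if x = y then 1 else 0) * A (Function.update a q 0) (Function.update b q 0)

/-- The qubit support of an operator: those qubits on which it does not act trivially. -/
def qsupp {ι : Type*} [DecidableEq ι] (A : QOp ι) : Set ι :=
  {q | ¬ ActsTriviallyOn A q}

/-- Ordered product `∏_{i ∈ c} f i` taken in increasing index order. -/
def finOProd {m : ℕ} {α : Type*} [Monoid α] (c : Finset (Fin m)) (f : Fin m → α) : α :=
  ((c.sort (· ≤ ·)).map f).prod

/-- The stabilizer `S_c = ∏_{i ∈ c} K i` (in increasing index order). -/
def stabProd {n : ℕ} (K : Fin n → QOp (Fin n)) (c : Finset (Fin n)) : QOp (Fin n) :=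
  finOProd c K

/-- The stabilizer `S_c` is trivial with respect to the generators `K`. -/
def IsTrivial {n : ℕ} (K : Fin n → QOp (Fin n)) (c : Finset (Fin n)) : Prop :=
  ∃ α β : Finset (Fin n), α.Nonempty ∧ β.Nonempty ∧ Disjoint α β ∧ α ∪ β = c ∧
    qsupp (stabProd K α) ∩ qsupp (stabProd K β) = ∅

/-- The single-qubit operator `u` acting on qubit `q` (identity elsewhere). -/
def embed1 {ι : Type*} [Fintype ι] [DecidableEq ι]
    (u : Matrix (Fin 2) (Fin 2) ℂ) (q : ι) : QOp ι :=
  Matrix.of fun a b =>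
    u (a q) (b q) * ∏ i ∈ Finset.univ.erase q, (if a i = b i then (1 : ℂ) else 0)

/-- The controlled-Z gate on qubits `u` and `v`. -/
def CZop {ι : Type*} [Fintype ι] [DecidableEq ι] (u v : ι) : QOp ι :=
  Matrix.diagonal fun a => if a u = 1 ∧ a v = 1 then (-1 : ℂ) else 1

set_option linter.unusedSectionVars false
set_option linter.unusedVariables false

section Aux

variable {ι : Type*} [Fintype ι] [DecidableEq ι]

-- ## lemmas about pauliTensor

variable {ι : Type*} [Fintype ι] [DecidableEq ι]

lemma pauliTensor_mul (c d : ℂ) (P Q : ι → Matrix (Fin 2) (Fin 2) ℂ) :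
    pauliTensor c P * pauliTensor d Q = pauliTensor (c * d) (fun i => P i * Q i) := by
  ext a b
  simp only [pauliTensor, Matrix.mul_apply, Matrix.of_apply]
  rw [Finset.prod_univ_sum (fun _ => Finset.univ) (fun i z => P i (a i) z * Q i z (b i))]
  rw [Fintype.piFinset_univ]
  rw [Finset.mul_sum]
  refine Finset.sum_congr rfl fun k _ => ?_
  rw [Finset.prod_mul_distrib]
  ring

lemma pauliTensor_conjTranspose (c : ℂ) (P : ι → Matrix (Fin 2) (Fin 2) ℂ) :
    (pauliTensor c P)ᴴ = pauliTensor ((starRingEnd ℂ) c) (fun i => (P i)ᴴ) := by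
  ext a b
  show star (c * ∏ i, P i (b i) (a i)) = (starRingEnd ℂ) c * ∏ i, (P i)ᴴ (a i) (b i)
  rw [star_mul', ← starRingEnd_apply, ← starRingEnd_apply, map_prod]
  rfl

lemma pauliTensor_one : pauliTensor (1 : ℂ) (fun _ : ι => (1 : Matrix (Fin 2) (Fin 2) ℂ)) = 1 := by
  ext a b
  simp only [pauliTensor, Matrix.of_apply, one_mul, Matrix.one_apply]
  by_cases h : a = b
  · subst h; simp
  · rw [if_neg h]
    obtain ⟨i, hi⟩ : ∃ i, a i ≠ b i := by
      by_contra hc; push_neg at hc; exact h (funext hc)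
    exact Finset.prod_eq_zero (Finset.mem_univ i) (by simp [Matrix.one_apply, hi])

-- unitary-like pauli tensors
def IsUQ {ι : Type*} [Fintype ι] (A : QOp ι) : Prop :=
  ∃ (c : ℂ) (P : ι → Matrix (Fin 2) (Fin 2) ℂ),
    c * (starRingEnd ℂ) c = 1 ∧ (∀ i, P i * (P i)ᴴ = 1) ∧ A = pauliTensor c P

lemma IsUQ.one : IsUQ (1 : QOp ι) :=
  ⟨1, fun _ => 1, by simp, fun _ => by simp, pauliTensor_one.symm⟩

lemma IsUQ.mul {A B : QOp ι} (hA : IsUQ A) (hB : IsUQ B) : IsUQ (A * B) := by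
  obtain ⟨c, P, hc, hP, rfl⟩ := hA
  obtain ⟨d, Q, hd, hQ, rfl⟩ := hB
  refine ⟨c * d, fun i => P i * Q i, ?_, fun i => ?_, (pauliTensor_mul ..)⟩
  · rw [_root_.map_mul, mul_mul_mul_comm, hc, hd, one_mul]
  · rw [Matrix.conjTranspose_mul, mul_assoc, ← mul_assoc (Q i), hQ i, one_mul, hP i]

lemma IsUQ.mul_conjTranspose {A : QOp ι} (hA : IsUQ A) : A * Aᴴ = 1 := by
  obtain ⟨c, P, hc, hP, rfl⟩ := hA
  rw [pauliTensor_conjTranspose, pauliTensor_mul, hc]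
  have : (fun i => P i * (P i)ᴴ) = fun _ : ι => (1 : Matrix (Fin 2) (Fin 2) ℂ) :=
    funext fun i => hP i
  rw [this, pauliTensor_one]

lemma IsPauliTensor.isUQ {A : QOp ι} (h : IsPauliTensor A) : IsUQ A := by
  obtain ⟨c, P, hc, hP, rfl⟩ := h
  refine ⟨c, P, ?_, fun i => ?_, rfl⟩
  · rcases hc with rfl | rfl | rfl | rfl <;> simp [Complex.conj_I]
  · rcases hP i with h | h | h | h <;> rw [h]
    · simp
    · ext i j
      fin_cases i <;> fin_cases j <;>
        simp [Xmat, Matrix.mul_apply, Fin.sum_univ_two, Matrix.conjTranspose_apply,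
          Matrix.one_apply]
    · ext i j
      fin_cases i <;> fin_cases j <;>
        simp [Ymat, Matrix.mul_apply, Fin.sum_univ_two, Matrix.conjTranspose_apply,
          Matrix.one_apply, Complex.conj_I]
    · ext i j
      fin_cases i <;> fin_cases j <;>
        simp [Zmat, Matrix.mul_apply, Fin.sum_univ_two, Matrix.conjTranspose_apply,
          Matrix.one_apply]

-- ## ActsTriviallyOn lemmas

lemma ActsTriviallyOn.mul {A B : QOp ι} {q : ι}
    (hA : ActsTriviallyOn A q) (hB : ActsTriviallyOn B q) : ActsTriviallyOn (A * B) q := by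
  intro a b x y
  simp only [Matrix.mul_apply]
  have key : ∀ (k : ι → Fin 2) (x y : Fin 2),
      A (Function.update a q x) k * B k (Function.update b q y) =
      (if x = k q then 1 else 0) * (if k q = y then 1 else 0) *
        (A (Function.update a q 0) (Function.update k q 0) *
          B (Function.update k q 0) (Function.update b q 0)) := by
    intro k x y
    conv_lhs => rw [← Function.update_eq_self q k]
    rw [hA a k x (k q), hB k b (k q) y]
    ring
  rw [Finset.sum_congr rfl fun k _ => key k x y, Finset.sum_congr rfl fun k _ => key k 0 0]
  by_cases hxy : x = y
  · subst hxy
    rw [if_pos rfl, one_mul]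
    refine Fintype.sum_bijective (fun k => Function.update k q (Equiv.swap x 0 (k q)))
      ?_ _ _ fun k => ?_
    · refine Function.Involutive.bijective fun k => ?_
      funext i
      by_cases hi : i = q
      · subst hi; simp
      · simp [Function.update_of_ne hi]
    · have h1 : Function.update k q (Equiv.swap x 0 (k q)) q = Equiv.swap x 0 (k q) :=
        Function.update_self _ _ _
      have h2 : Function.update (Function.update k q (Equiv.swap x 0 (k q))) q 0 =
          Function.update k q 0 := by
        funext i
        by_cases hi : i = q
        · subst hi; simp
        · simp [Function.update_of_ne hi]
      rw [h1, h2]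
      by_cases hk : x = k q
      · rw [← hk, Equiv.swap_apply_left]
        simp
      · rw [if_neg hk, if_neg fun h : k q = x => hk h.symm]
        have hne : Equiv.swap x 0 (k q) ≠ 0 := fun h => hk (by
          have h2 := congrArg (Equiv.swap x 0) h
          rwa [Equiv.swap_apply_self, Equiv.swap_apply_right, eq_comm] at h2)
        rw [if_neg fun h : (0 : Fin 2) = _ => hne h.symm, if_neg hne]
  · rw [if_neg hxy, zero_mul]
    refine Finset.sum_eq_zero fun k _ => ?_
    by_cases h1 : x = k q
    · rw [if_neg (show ¬ k q = y from fun h => hxy (h1.trans h)), mul_zero, zero_mul]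
    · rw [if_neg h1, zero_mul, zero_mul]

lemma ActsTriviallyOn.conjTranspose {A : QOp ι} {q : ι}
    (hA : ActsTriviallyOn A q) : ActsTriviallyOn Aᴴ q := by
  intro a b x y
  show star (A (Function.update b q y) (Function.update a q x)) =
    _ * star (A (Function.update b q 0) (Function.update a q 0))
  rw [hA b a y x, star_mul']
  congr 1
  by_cases h : x = y
  · subst h; simp
  · rw [if_neg fun hh : y = x => h hh.symm, if_neg h, star_zero]

-- ## CZ lemmas

lemma CZop_conjTranspose (u v : ι) : (CZop u v)ᴴ = CZop u v := by
  rw [CZop, Matrix.diagonal_conjTranspose]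
  refine congrArg Matrix.diagonal (funext fun a => ?_)
  show star _ = _
  split_ifs <;> simp

lemma CZop_mul_self (u v : ι) : CZop u v * CZop u v = 1 := by
  rw [CZop, Matrix.diagonal_mul_diagonal, ← Matrix.diagonal_one]
  refine congrArg Matrix.diagonal (funext fun a => ?_)
  split_ifs <;> norm_num

lemma ActsTriviallyOn.apply_eq_zero {A : QOp ι} {q : ι} (hA : ActsTriviallyOn A q)
    {a b : ι → Fin 2} (h : a q ≠ b q) : A a b = 0 := by
  have h2 := hA a b (a q) (b q)
  rw [Function.update_eq_self, Function.update_eq_self, if_neg h, zero_mul] at h2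
  exact h2

lemma update_eq_update_iff {a b : ι → Fin 2} {q : ι} {x y : Fin 2} :
    Function.update a q x = Function.update b q y ↔
      x = y ∧ Function.update a q 0 = Function.update b q 0 := by
  constructor
  · intro h
    constructor
    · have := congrFun h q; simpa using this
    · funext i
      by_cases hi : i = q
      · subst hi; simp
      · have := congrFun h i
        simpa [Function.update_of_ne hi] using this
  · rintro ⟨rfl, h⟩
    funext i
    by_cases hi : i = q
    · subst hi; simp
    · have := congrFun h i
      simpa [Function.update_of_ne hi] using this

lemma CZop_actsTriviallyOn {u v q : ι} (hqu : q ≠ u) (hqv : q ≠ v) :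
    ActsTriviallyOn (CZop u v) q := by
  intro a b x y
  show Matrix.diagonal _ _ _ = _ * Matrix.diagonal _ _ _
  rw [Matrix.diagonal_apply, Matrix.diagonal_apply]
  have hd : ∀ (cf : ι → Fin 2) (z : Fin 2),
      (if Function.update cf q z u = 1 ∧ Function.update cf q z v = 1 then (-1 : ℂ) else 1) =
      (if cf u = 1 ∧ cf v = 1 then (-1 : ℂ) else 1) := by
    intro cf z
    rw [Function.update_of_ne (Ne.symm hqu), Function.update_of_ne (Ne.symm hqv)]
  by_cases h : Function.update a q x = Function.update b q y
  · obtain ⟨rfl, h0⟩ := update_eq_update_iff.mp h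
    rw [if_pos h, if_pos h0, if_pos rfl, one_mul, hd, hd]
  · rw [if_neg h]
    rw [update_eq_update_iff, not_and_or] at h
    rcases h with h | h
    · rw [if_neg h, zero_mul]
    · rw [if_neg h, mul_zero]

lemma CZop_commute {u v : ι} {A : QOp ι}
    (hu : ActsTriviallyOn A u) (hv : ActsTriviallyOn A v) :
    CZop u v * A = A * CZop u v := by
  ext a b
  rw [CZop, Matrix.diagonal_mul, Matrix.mul_diagonal]
  by_cases hab : a u = b u ∧ a v = b v
  · rw [hab.1, hab.2, mul_comm]
  · rcases not_and_or.mp hab with h | h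
    · rw [hu.apply_eq_zero h, mul_zero, zero_mul]
    · rw [hv.apply_eq_zero h, mul_zero, zero_mul]

lemma conj_eq_self {u v : ι} {A : QOp ι}
    (hg : CZop u v * CZop u v = 1)
    (hu : ActsTriviallyOn A u) (hv : ActsTriviallyOn A v) :
    CZop u v * A * CZop u v = A := by
  rw [CZop_commute hu hv, mul_assoc, hg, mul_one]

-- ## finOProd / stabProd machinery

lemma multiset_noncommProd_congr {M : Type*} [Monoid M] (s t : Multiset M)
    (hs : {x | x ∈ s}.Pairwise Commute) (ht : {x | x ∈ t}.Pairwise Commute) (h : s = t) :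
    s.noncommProd hs = t.noncommProd ht := by subst h; rfl

lemma finOProd_eq_noncommProd {m : ℕ} {M : Type*} [Monoid M] (c : Finset (Fin m))
    (f : Fin m → M) (h : (c : Set (Fin m)).Pairwise (Function.onFun Commute f)) :
    finOProd c f = c.noncommProd f h := by
  rw [Finset.noncommProd, finOProd]
  rw [← Multiset.noncommProd_coe (List.map f (c.sort (· ≤ ·)))
    (by
      intro x hx y hy hxy
      simp only [Multiset.mem_coe, List.mem_map] at hx hy
      obtain ⟨i, hi, rfl⟩ := hx
      obtain ⟨j, hj, rfl⟩ := hy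
      exact h (by simpa using (Finset.mem_sort (α := Fin m) (· ≤ ·)).mp hi)
        (by simpa using (Finset.mem_sort (α := Fin m) (· ≤ ·)).mp hj)
        (by rintro rfl; exact hxy rfl))]
  refine multiset_noncommProd_congr _ _ _ _ ?_
  rw [← Multiset.map_coe, Finset.sort_eq]

lemma stabProd_eq_noncommProd {n : ℕ} (K : Fin n → QOp (Fin n))
    (hcomm : ∀ i j, Commute (K i) (K j)) (c : Finset (Fin n)) :
    stabProd K c = c.noncommProd K (fun i _ j _ _ => hcomm i j) :=
  finOProd_eq_noncommProd c K _

lemma stabProd_union {n : ℕ} (K : Fin n → QOp (Fin n))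
    (hcomm : ∀ i j, Commute (K i) (K j)) {α β : Finset (Fin n)} (h : Disjoint α β) :
    stabProd K (α ∪ β) = stabProd K α * stabProd K β := by
  rw [stabProd_eq_noncommProd K hcomm, stabProd_eq_noncommProd K hcomm,
    stabProd_eq_noncommProd K hcomm]
  exact Finset.noncommProd_union_of_disjoint h K _

lemma conj_list_prod {M : Type*} [Monoid M] (g : M) (hg : g * g = 1) (l : List M) :
    (l.map fun A => g * A * g).prod = g * l.prod * g := by
  induction l with
  | nil => rw [List.map_nil, List.prod_nil, mul_one, hg]
  | cons a l ih =>
    rw [List.map_cons, List.prod_cons, List.prod_cons, ih]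
    have h2 : g * (g * (l.prod * g)) = l.prod * g := by rw [← mul_assoc, hg, one_mul]
    simp only [mul_assoc, h2]

lemma stabProd_conj {n : ℕ} (g : QOp (Fin n)) (hg : g * g = 1)
    (K : Fin n → QOp (Fin n)) (c : Finset (Fin n)) :
    stabProd (fun i => g * K i * g) c = g * stabProd K c * g := by
  unfold stabProd finOProd
  have h1 : (fun i => g * K i * g) = (fun A => g * A * g) ∘ K := rfl
  rw [h1, ← List.map_map, conj_list_prod g hg]

lemma isUQ_list_prod {l : List (QOp ι)} (h : ∀ A ∈ l, IsUQ A) : IsUQ l.prod := by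
  induction l with
  | nil => rw [List.prod_nil]; exact IsUQ.one
  | cons a l ih =>
    rw [List.prod_cons]
    exact (h a List.mem_cons_self).mul (ih fun A hA => h A (List.mem_cons_of_mem _ hA))

lemma stabProd_isUQ {n : ℕ} (K : Fin n → QOp (Fin n))
    (hPauli : ∀ i, IsPauliTensor (K i)) (c : Finset (Fin n)) : IsUQ (stabProd K c) := by
  refine isUQ_list_prod fun A hA => ?_
  rw [List.mem_map] at hA
  obtain ⟨i, _, rfl⟩ := hA
  exact (hPauli i).isUQ

-- ## main forward lemma

lemma mem_qsupp_iff {A : QOp ι} {q : ι} : q ∉ qsupp A ↔ ActsTriviallyOn A q := by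
  simp [qsupp]

lemma forward_lemma {n : ℕ} (K : Fin n → QOp (Fin n))
    (hcomm : ∀ i j, Commute (K i) (K j))
    (hU : ∀ s : Finset (Fin n), stabProd K s * (stabProd K s)ᴴ = 1)
    (u v : Fin n) (c : Finset (Fin n))
    (hu : u ∉ qsupp (stabProd K c)) (hv : v ∉ qsupp (stabProd K c)) :
    IsTrivial K c → IsTrivial (fun i => CZop u v * K i * (CZop u v)ᴴ) c := by
  rintro ⟨α, β, hα, hβ, hdisj, hunion, hsupp⟩
  have hgH : (CZop u v)ᴴ = CZop u v := CZop_conjTranspose u v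
  have hg : CZop u v * CZop u v = 1 := CZop_mul_self u v
  have hSc : stabProd K c = stabProd K α * stabProd K β := by
    rw [← hunion, stabProd_union K hcomm hdisj]
  have hu' : ActsTriviallyOn (stabProd K c) u := mem_qsupp_iff.mp hu
  have hv' : ActsTriviallyOn (stabProd K c) v := mem_qsupp_iff.mp hv
  have key : ∀ q : Fin n, ActsTriviallyOn (stabProd K c) q →
      ActsTriviallyOn (stabProd K α) q ∧ ActsTriviallyOn (stabProd K β) q := by
    intro q hq
    have hnot : ¬(¬ActsTriviallyOn (stabProd K α) q ∧ ¬ActsTriviallyOn (stabProd K β) q) := by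
      rintro ⟨h1, h2⟩
      have hmem : q ∈ qsupp (stabProd K α) ∩ qsupp (stabProd K β) := ⟨h1, h2⟩
      rw [hsupp] at hmem
      exact hmem
    by_cases h1 : ActsTriviallyOn (stabProd K α) q
    · refine ⟨h1, ?_⟩
      have hinv : (stabProd K α)ᴴ * stabProd K α = 1 := mul_eq_one_comm.mp (hU α)
      have hβeq : stabProd K β = (stabProd K α)ᴴ * stabProd K c := by
        rw [hSc, ← mul_assoc, hinv, one_mul]
      rw [hβeq]
      exact h1.conjTranspose.mul hq
    · exfalso
      have h2 : ActsTriviallyOn (stabProd K β) q := by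
        by_contra h2; exact hnot ⟨h1, h2⟩
      apply h1
      have hαeq : stabProd K α = stabProd K c * (stabProd K β)ᴴ := by
        rw [hSc, mul_assoc, hU β, mul_one]
      rw [hαeq]
      exact hq.mul h2.conjTranspose
  obtain ⟨hαu, hβu⟩ := key u hu'
  obtain ⟨hαv, hβv⟩ := key v hv'
  have hfun : (fun i => CZop u v * K i * (CZop u v)ᴴ) = fun i => CZop u v * K i * CZop u v := by
    simp only [hgH]
  have hconjα : stabProd (fun i => CZop u v * K i * (CZop u v)ᴴ) α = stabProd K α := by
    rw [hfun, stabProd_conj _ hg, conj_eq_self hg hαu hαv]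
  have hconjβ : stabProd (fun i => CZop u v * K i * (CZop u v)ᴴ) β = stabProd K β := by
    rw [hfun, stabProd_conj _ hg, conj_eq_self hg hβu hβv]
  exact ⟨α, β, hα, hβ, hdisj, hunion, by rw [hconjα, hconjβ]; exact hsupp⟩

lemma conjg_mul {M : Type*} [Monoid M] {g : M} (hg : g * g = 1) (A B : M) :
    (g * A * g) * (g * B * g) = g * (A * B) * g := by
  have h2 : g * (g * (B * g)) = B * g := by rw [← mul_assoc, hg, one_mul]
  simp only [mul_assoc, h2]


end Aux

/-- A stabilizer with no support on the qubits `u` and `v` is trivial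
w.r.t. the generators `K` iff its conjugate by the controlled-Z gate `CZ_{u,v}` is
trivial w.r.t. the conjugated generators. -/
theorem trivial_iff_conj_CZ {n : ℕ}
    (K : Fin n → QOp (Fin n)) (hPauli : ∀ i, IsPauliTensor (K i))
    (hcomm : ∀ i j, Commute (K i) (K j))
    (u v : Fin n) (huv : u ≠ v) (c : Finset (Fin n))
    (hu : u ∉ qsupp (stabProd K c)) (hv : v ∉ qsupp (stabProd K c)) :
    IsTrivial K c ↔
      IsTrivial (fun i => CZop u v * K i * (CZop u v)ᴴ) c := by
  have hgH : (CZop u v)ᴴ = CZop u v := CZop_conjTranspose u v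
  have hg : CZop u v * CZop u v = 1 := CZop_mul_self u v
  have hU : ∀ s : Finset (Fin n), stabProd K s * (stabProd K s)ᴴ = 1 :=
    fun s => (stabProd_isUQ K hPauli s).mul_conjTranspose
  constructor
  · exact forward_lemma K hcomm hU u v c hu hv
  · intro h
    set K' : Fin n → QOp (Fin n) := fun i => CZop u v * K i * (CZop u v)ᴴ with hK'
    have hfun : K' = fun i => CZop u v * K i * CZop u v := by simp only [hK', hgH]
    have hstab : ∀ s, stabProd K' s = CZop u v * stabProd K s * CZop u v := by
      intro s; rw [hfun, stabProd_conj _ hg]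
    have hcomm' : ∀ i j, Commute (K' i) (K' j) := by
      intro i j
      show K' i * K' j = K' j * K' i
      rw [hfun]
      dsimp only
      rw [conjg_mul hg, conjg_mul hg, hcomm i j]
    have hU' : ∀ s : Finset (Fin n), stabProd K' s * (stabProd K' s)ᴴ = 1 := by
      intro s
      rw [hstab s, Matrix.conjTranspose_mul, Matrix.conjTranspose_mul, hgH,
        ← mul_assoc (CZop u v) (stabProd K s)ᴴ (CZop u v),
        conjg_mul hg, hU s, mul_one, hg]
    have hu' : ActsTriviallyOn (stabProd K c) u := by simpa [qsupp] using hu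
    have hv' : ActsTriviallyOn (stabProd K c) v := by simpa [qsupp] using hv
    have hstabc : stabProd K' c = stabProd K c := by
      rw [hstab c, conj_eq_self hg hu' hv']
    have hu'' : u ∉ qsupp (stabProd K' c) := by rw [hstabc]; exact hu
    have hv'' : v ∉ qsupp (stabProd K' c) := by rw [hstabc]; exact hv
    have hres := forward_lemma K' hcomm' hU' u v c hu'' hv'' h
    have hback : (fun i => CZop u v * K' i * (CZop u v)ᴴ) = K := by
      funext i
      rw [hgH, hfun]
      dsimp only
      rw [← mul_assoc, ← mul_assoc, hg, one_mul, mul_assoc, hg, mul_one]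
    rwa [hback] at hres
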